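/- The sequence E(n) = 2√π·(n/(2e))^{n/2}/Γ((n+1)/2) of entropies of round spheres is strictly decreasing: for every n ∈ ℕ, E(n+1) < E(n). In particular 2 = E(0) > E(1) > E(2) > E(3) > ⋯. -/

import Mathlib

open Real Filter Topology

/-- Stone's formula for the entropy of the round `n`-sphere (with `0 ^ 0 = 1`). -/
noncomputable def sphereEntropy (n : ℕ) : ℝ :=
  2 * Real.sqrt Real.pi * ((n : ℝ) / (2 * Real.exp 1)) ^ ((n : ℝ) / 2) /
    Real.Gamma (((n : ℝ) + 1) / 2)



lemma artanh_lower {y : ℝ} (h0 : 0 ≤ y) (h1 : y < 1) :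
    2*y + 2*y^3/3 ≤ Real.log (1+y) - Real.log (1-y) := by
  set F : ℝ → ℝ := fun t => Real.log (1+t) - Real.log (1-t) - (2*t + 2*t^3/3) with hF
  have hder : ∀ t ∈ Set.Ico (0:ℝ) 1,
      HasDerivAt F (1/(1+t) + 1/(1-t) - (2 + 2*t^2)) t := by
    intro t ht
    have h1t : (0:ℝ) < 1 + t := by linarith [ht.1]
    have h2t : (0:ℝ) < 1 - t := by linarith [ht.2]
    have d1 : HasDerivAt (fun t : ℝ => Real.log (1+t)) (1/(1+t)) t := by
      have := ((hasDerivAt_id t).const_add (1:ℝ)).log h1t.ne'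
      simpa using this
    have d2 : HasDerivAt (fun t : ℝ => Real.log (1-t)) (-(1/(1-t))) t := by
      have h : HasDerivAt (fun t : ℝ => 1 - t) (-1) t := by
        simpa using ((hasDerivAt_id t).const_sub (1:ℝ))
      have := h.log h2t.ne'
      field_simp at this ⊢
      convert this using 1
    have d3 : HasDerivAt (fun t : ℝ => 2*t + 2*t^3/3) (2 + 2*t^2) t := by
      have h : HasDerivAt (fun t : ℝ => t^3) (3*t^2) t := by
        simpa using hasDerivAt_pow 3 t
      have := ((hasDerivAt_id t).const_mul (2:ℝ)).add ((h.const_mul (2:ℝ)).div_const 3)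
      exact this.congr_deriv (by ring)
    have := (d1.sub d2).sub d3
    exact this.congr_deriv (by ring)
  have hmono : MonotoneOn F (Set.Ico (0:ℝ) 1) := by
    apply monotoneOn_of_deriv_nonneg (convex_Ico 0 1)
    · exact fun t ht => ((hder t ht).continuousAt).continuousWithinAt
    · intro t ht
      rw [interior_Ico] at ht
      exact ((hder t ⟨le_of_lt ht.1, ht.2⟩).differentiableAt).differentiableWithinAt
    · intro t ht
      rw [interior_Ico] at ht
      rw [(hder t ⟨le_of_lt ht.1, ht.2⟩).deriv]
      have h1t : (0:ℝ) < 1 + t := by linarith [ht.1]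
      have h2t : (0:ℝ) < 1 - t := by linarith [ht.2]
      rw [div_add_div _ _ h1t.ne' h2t.ne', sub_nonneg, ← sub_nonneg]
      have : (1*(1-t) + (1+t)*1) / ((1+t)*(1-t)) - (2 + 2*t^2)
          = 2*t^4 / ((1+t)*(1-t)) := by
        field_simp
        ring
      rw [this]
      positivity
  have h0' : F 0 ≤ F y := by
    rcases eq_or_lt_of_le h0 with h | h
    · rw [← h]
    · exact hmono ⟨le_refl 0, one_pos⟩ ⟨h0, h1⟩ h0
  have hF0 : F 0 = 0 := by simp [hF]
  rw [hF0] at h0'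
  simp only [hF] at h0'
  linarith

lemma artanh_upper {y : ℝ} (h0 : 0 ≤ y) (h1 : y < 1) :
    Real.log (1+y) - Real.log (1-y) ≤ 2*y + (2*y^3/3)/(1-y^2) := by
  set F : ℝ → ℝ := fun t => 2*t + (2*t^3/3)/(1-t^2) - (Real.log (1+t) - Real.log (1-t)) with hF
  have hder : ∀ t ∈ Set.Ico (0:ℝ) 1,
      HasDerivAt F (2 + ((2*t^2)*(1-t^2) + (2*t^3/3)*(2*t))/(1-t^2)^2 - (1/(1+t) + 1/(1-t))) t := by
    intro t ht
    have h1t : (0:ℝ) < 1 + t := by linarith [ht.1]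
    have h2t : (0:ℝ) < 1 - t := by linarith [ht.2]
    have h3t : (0:ℝ) < 1 - t^2 := by nlinarith [ht.1, ht.2]
    have d1 : HasDerivAt (fun t : ℝ => Real.log (1+t)) (1/(1+t)) t := by
      have := ((hasDerivAt_id t).const_add (1:ℝ)).log h1t.ne'
      simpa using this
    have d2 : HasDerivAt (fun t : ℝ => Real.log (1-t)) (-(1/(1-t))) t := by
      have h : HasDerivAt (fun t : ℝ => 1 - t) (-1) t := by
        simpa using ((hasDerivAt_id t).const_sub (1:ℝ))
      have := h.log h2t.ne'
      field_simp at this ⊢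
      convert this using 1
    have dnum : HasDerivAt (fun t : ℝ => 2*t^3/3) (2*t^2) t := by
      have h : HasDerivAt (fun t : ℝ => t^3) (3*t^2) t := by
        simpa using hasDerivAt_pow 3 t
      have := (h.const_mul (2:ℝ)).div_const 3
      exact this.congr_deriv (by ring)
    have dden : HasDerivAt (fun t : ℝ => 1 - t^2) (-(2*t)) t := by
      have h : HasDerivAt (fun t : ℝ => t^2) (2*t) t := by
        simpa using hasDerivAt_pow 2 t
      simpa using (h.const_sub (1:ℝ))
    have dq : HasDerivAt (fun t : ℝ => (2*t^3/3)/(1-t^2))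
        (((2*t^2)*(1-t^2) - (2*t^3/3)*(-(2*t)))/(1-t^2)^2) t := dnum.div dden h3t.ne'
    have dlin : HasDerivAt (fun t : ℝ => 2*t) (2:ℝ) t := by
      simpa using (hasDerivAt_id t).const_mul (2:ℝ)
    have := (dlin.add dq).sub (d1.sub d2)
    exact this.congr_deriv (by ring)
  have hmono : MonotoneOn F (Set.Ico (0:ℝ) 1) := by
    apply monotoneOn_of_deriv_nonneg (convex_Ico 0 1)
    · exact fun t ht => ((hder t ht).continuousAt).continuousWithinAt
    · intro t ht
      rw [interior_Ico] at ht
      exact ((hder t ⟨le_of_lt ht.1, ht.2⟩).differentiableAt).differentiableWithinAt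
    · intro t ht
      rw [interior_Ico] at ht
      rw [(hder t ⟨le_of_lt ht.1, ht.2⟩).deriv]
      have h1t : (0:ℝ) < 1 + t := by linarith [ht.1]
      have h2t : (0:ℝ) < 1 - t := by linarith [ht.2]
      have h3t : (0:ℝ) < 1 - t^2 := by nlinarith [ht.1, ht.2]
      rw [div_add_div _ _ h1t.ne' h2t.ne', ← sub_nonneg]
      have heq : 2 + ((2*t^2)*(1-t^2) + (2*t^3/3)*(2*t))/(1-t^2)^2
          - (1*(1-t) + (1+t)*1)/((1+t)*(1-t)) - 0 = (4*t^4/3)/(1-t^2)^2 := by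
        have : (1+t)*(1-t) = 1 - t^2 := by ring
        rw [this]
        field_simp
        ring
      rw [sub_zero] at heq
      rw [heq]
      rw [sub_zero]
      exact div_nonneg (by positivity) (sq_nonneg _)
  have h0' : F 0 ≤ F y := by
    rcases eq_or_lt_of_le h0 with h | h
    · rw [← h]
    · exact hmono ⟨le_refl 0, one_pos⟩ ⟨h0, h1⟩ h0
  have hF0 : F 0 = 0 := by simp [hF]
  rw [hF0] at h0'
  simp only [hF] at h0'
  linarith


set_option maxHeartbeats 2000000 in
lemma key_log {x : ℝ} (hx : 1 ≤ x) :
    x * (Real.log (x+1) - Real.log x) + (Real.log (x+2) - Real.log (x+1))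
      < (x+3) * (Real.log (x+3) - Real.log (x+2)) := by
  have hx0 : (0:ℝ) < x := by linarith
  set a : ℝ := 1/(2*x+5) with ha
  set b : ℝ := 1/(2*x+3) with hb
  set c : ℝ := 1/(2*x+1) with hc
  have ha5 : (0:ℝ) < 2*x+5 := by linarith
  have hb3 : (0:ℝ) < 2*x+3 := by linarith
  have hc1 : (0:ℝ) < 2*x+1 := by linarith
  have ha0 : 0 ≤ a := by positivity
  have hb0 : 0 ≤ b := by positivity
  have hc0 : 0 ≤ c := by positivity
  have ha1 : a < 1 := by rw [ha, div_lt_one ha5]; linarith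
  have hb1 : b < 1 := by rw [hb, div_lt_one hb3]; linarith
  have hc1' : c < 1 := by rw [hc, div_lt_one hc1]; linarith
  -- rewrite log differences
  have ec : Real.log (x+1) - Real.log x = Real.log (1+c) - Real.log (1-c) := by
    have h1 : 1 + c = (2*(x+1))/(2*x+1) := by rw [hc]; field_simp; try ring
    have h2 : 1 - c = (2*x)/(2*x+1) := by rw [hc]; field_simp; try ring
    rw [h1, h2, Real.log_div (by positivity) hc1.ne',
        Real.log_div (by positivity) hc1.ne',
        Real.log_mul two_ne_zero (by positivity),
        Real.log_mul two_ne_zero hx0.ne']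
    ring
  have eb : Real.log (x+2) - Real.log (x+1) = Real.log (1+b) - Real.log (1-b) := by
    have h1 : 1 + b = (2*(x+2))/(2*x+3) := by rw [hb]; field_simp; try ring
    have h2 : 1 - b = (2*(x+1))/(2*x+3) := by rw [hb]; field_simp; try ring
    rw [h1, h2, Real.log_div (by positivity) hb3.ne',
        Real.log_div (by positivity) hb3.ne',
        Real.log_mul two_ne_zero (by positivity),
        Real.log_mul two_ne_zero (by positivity)]
    ring
  have ea : Real.log (x+3) - Real.log (x+2) = Real.log (1+a) - Real.log (1-a) := by
    have h1 : 1 + a = (2*(x+3))/(2*x+5) := by rw [ha]; field_simp; try ring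
    have h2 : 1 - a = (2*(x+2))/(2*x+5) := by rw [ha]; field_simp; try ring
    rw [h1, h2, Real.log_div (by positivity) ha5.ne',
        Real.log_div (by positivity) ha5.ne',
        Real.log_mul two_ne_zero (by positivity),
        Real.log_mul two_ne_zero (by positivity)]
    ring
  rw [ec, eb, ea]
  have ubc := artanh_upper hc0 hc1'
  have ubb := artanh_upper hb0 hb1
  have lba := artanh_lower ha0 ha1
  have hc2 : 1 - c^2 = (4*x^2+4*x)/(2*x+1)^2 := by
    rw [hc]; field_simp; ring
  have hb2 : 1 - b^2 = (4*x^2+12*x+8)/(2*x+3)^2 := by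
    rw [hb]; field_simp; ring
  have hx1 : (0:ℝ) < x + 1 := by linarith
  have hx2 : (0:ℝ) < x + 2 := by linarith
  have T1 : 2*c + (2*c^3/3)/(1-c^2) = 2/(2*x+1) + 1/(6*x*(x+1)*(2*x+1)) := by
    rw [hc2, hc, div_div_div_eq]
    field_simp
    ring
  have T2 : 2*b + (2*b^3/3)/(1-b^2) = 2/(2*x+3) + 1/(6*(x+1)*(x+2)*(2*x+3)) := by
    rw [hb2, hb, div_div_div_eq]
    field_simp
    ring
  have key2 : x*(2*c + (2*c^3/3)/(1-c^2)) + (2*b + (2*b^3/3)/(1-b^2))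
      < (x+3)*(2*a + 2*a^3/3) := by
    rw [T1, T2, ha, ← sub_pos]
    have expand : (x+3)*(2*(1/(2*x+5)) + 2*(1/(2*x+5))^3/3)
        - (x*(2/(2*x+1) + 1/(6*x*(x+1)*(2*x+1)))
          + (2/(2*x+3) + 1/(6*(x+1)*(x+2)*(2*x+3))))
        = (128*x^4+1020*x^3+2964*x^2+3669*x+1597)
          / (6*(x+1)*(x+2)*(2*x+1)*(2*x+3)*(2*x+5)^3) := by
      field_simp
      ring
    rw [expand]
    positivity
  have hmul : x * (Real.log (1+c) - Real.log (1-c)) ≤ x*(2*c + (2*c^3/3)/(1-c^2)) :=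
    mul_le_mul_of_nonneg_left ubc hx0.le
  have hmul2 : (x+3)*(2*a + 2*a^3/3) ≤ (x+3) * (Real.log (1+a) - Real.log (1-a)) :=
    mul_le_mul_of_nonneg_left lba (by linarith)
  linarith




lemma key_rpow {x : ℝ} (hx : 1 ≤ x) :
    ((x+1)/(2*exp 1))^((x+1)/2) * ((x+2)/(2*exp 1))^((x+2)/2) * ((x+2)/2)
      < (x/(2*exp 1))^(x/2) * ((x+3)/(2*exp 1))^((x+3)/2) * ((x+1)/2) := by
  have hx0 : (0:ℝ) < x := by linarith
  have h1 : (0:ℝ) < x+1 := by linarith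
  have h2 : (0:ℝ) < x+2 := by linarith
  have h3 : (0:ℝ) < x+3 := by linarith
  have he : (0:ℝ) < 2*exp 1 := by positivity
  have b0 : (0:ℝ) < x/(2*exp 1) := by positivity
  have b1 : (0:ℝ) < (x+1)/(2*exp 1) := by positivity
  have b2 : (0:ℝ) < (x+2)/(2*exp 1) := by positivity
  have b3 : (0:ℝ) < (x+3)/(2*exp 1) := by positivity
  have hL : (0:ℝ) < ((x+1)/(2*exp 1))^((x+1)/2) * ((x+2)/(2*exp 1))^((x+2)/2) * ((x+2)/2) := by
    have := Real.rpow_pos_of_pos b1 ((x+1)/2)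
    have := Real.rpow_pos_of_pos b2 ((x+2)/2)
    positivity
  have hR : (0:ℝ) < (x/(2*exp 1))^(x/2) * ((x+3)/(2*exp 1))^((x+3)/2) * ((x+1)/2) := by
    have := Real.rpow_pos_of_pos b0 (x/2)
    have := Real.rpow_pos_of_pos b3 ((x+3)/2)
    positivity
  rw [← Real.exp_log hL, ← Real.exp_log hR, Real.exp_lt_exp]
  have eL : Real.log (((x+1)/(2*exp 1))^((x+1)/2) * ((x+2)/(2*exp 1))^((x+2)/2) * ((x+2)/2))
      = (x+1)/2 * (Real.log (x+1) - Real.log (2*exp 1))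
        + (x+2)/2 * (Real.log (x+2) - Real.log (2*exp 1))
        + (Real.log (x+2) - Real.log 2) := by
    rw [Real.log_mul (by positivity) (by positivity),
        Real.log_mul (ne_of_gt (Real.rpow_pos_of_pos b1 _)) (ne_of_gt (Real.rpow_pos_of_pos b2 _)),
        Real.log_rpow b1, Real.log_rpow b2,
        Real.log_div h1.ne' he.ne', Real.log_div h2.ne' he.ne',
        Real.log_div h2.ne' two_ne_zero]
  have eR : Real.log ((x/(2*exp 1))^(x/2) * ((x+3)/(2*exp 1))^((x+3)/2) * ((x+1)/2))
      = x/2 * (Real.log x - Real.log (2*exp 1))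
        + (x+3)/2 * (Real.log (x+3) - Real.log (2*exp 1))
        + (Real.log (x+1) - Real.log 2) := by
    rw [Real.log_mul (by positivity) (by positivity),
        Real.log_mul (ne_of_gt (Real.rpow_pos_of_pos b0 _)) (ne_of_gt (Real.rpow_pos_of_pos b3 _)),
        Real.log_rpow b0, Real.log_rpow b3,
        Real.log_div hx0.ne' he.ne', Real.log_div h3.ne' he.ne',
        Real.log_div h1.ne' two_ne_zero]
  rw [← sub_pos, eL, eR]
  have heq : x/2 * (Real.log x - Real.log (2*exp 1))
        + (x+3)/2 * (Real.log (x+3) - Real.log (2*exp 1))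
        + (Real.log (x+1) - Real.log 2)
      - ((x+1)/2 * (Real.log (x+1) - Real.log (2*exp 1))
        + (x+2)/2 * (Real.log (x+2) - Real.log (2*exp 1))
        + (Real.log (x+2) - Real.log 2))
      = ((x+3) * (Real.log (x+3) - Real.log (x+2))
          - (x * (Real.log (x+1) - Real.log x) + (Real.log (x+2) - Real.log (x+1))))/2 := by
    ring
  rw [heq]
  linarith [key_log hx]

lemma sphereEntropy_pos (n : ℕ) : 0 < sphereEntropy n := by
  unfold sphereEntropy
  apply div_pos
  · apply mul_pos (by positivity)
    rcases Nat.eq_zero_or_pos n with h | h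
    · subst h
      norm_num
    · exact Real.rpow_pos_of_pos (div_pos (by exact_mod_cast h) (by positivity)) _
  · exact Real.Gamma_pos_of_pos (by positivity)

lemma step (n : ℕ) (hn : 1 ≤ n) :
    sphereEntropy (n+1) / sphereEntropy n < sphereEntropy (n+3) / sphereEntropy (n+2) := by
  have hx : (1:ℝ) ≤ (n:ℝ) := by exact_mod_cast hn
  have hx0 : (0:ℝ) < (n:ℝ) := by linarith
  set x : ℝ := (n:ℝ) with hxdef
  have h1 : (0:ℝ) < x+1 := by linarith
  have h2 : (0:ℝ) < x+2 := by linarith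
  have hG1 : 0 < Real.Gamma ((x+1)/2) := Real.Gamma_pos_of_pos (by positivity)
  have hG2 : 0 < Real.Gamma ((x+2)/2) := Real.Gamma_pos_of_pos (by positivity)
  rw [div_lt_div_iff₀ (sphereEntropy_pos n) (sphereEntropy_pos (n+2))]
  unfold sphereEntropy
  push_cast
  have g3 : Real.Gamma ((x+2+1)/2) = ((x+1)/2) * Real.Gamma ((x+1)/2) := by
    rw [show (x+2+1)/2 = (x+1)/2 + 1 by ring, Real.Gamma_add_one (by positivity)]
  have g4 : Real.Gamma ((x+3+1)/2) = ((x+2)/2) * Real.Gamma ((x+1+1)/2) := by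
    rw [show (x+3+1)/2 = (x+1+1)/2 + 1 by ring, Real.Gamma_add_one (by positivity)]
    ring_nf
  have g2' : (x+1+1)/2 = (x+2)/2 := by ring
  rw [g3, g4, g2']
  have key := key_rpow hx
  have hK : (0:ℝ) < (2*Real.sqrt Real.pi)^2 * Real.Gamma ((x+1)/2) * Real.Gamma ((x+2)/2) := by
    positivity
  have hmul := mul_lt_mul_of_pos_right key hK
  rw [div_mul_div_comm, div_mul_div_comm, div_lt_div_iff₀ (by positivity) (by positivity)]
  calc 2*Real.sqrt Real.pi * ((x+1)/(2*exp 1))^((x+1)/2) * (2*Real.sqrt Real.pi * ((x+2)/(2*exp 1))^((x+2)/2))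
        * (((x+2)/2 * Real.Gamma ((x+2)/2)) * Real.Gamma ((x+1)/2))
      = ((x+1)/(2*exp 1))^((x+1)/2) * ((x+2)/(2*exp 1))^((x+2)/2) * ((x+2)/2)
        * ((2*Real.sqrt Real.pi)^2 * Real.Gamma ((x+1)/2) * Real.Gamma ((x+2)/2)) := by ring
    _ < (x/(2*exp 1))^(x/2) * ((x+3)/(2*exp 1))^((x+3)/2) * ((x+1)/2)
        * ((2*Real.sqrt Real.pi)^2 * Real.Gamma ((x+1)/2) * Real.Gamma ((x+2)/2)) := hmul
    _ = 2*Real.sqrt Real.pi * ((x+3)/(2*exp 1))^((x+3)/2) * (2*Real.sqrt Real.pi * (x/(2*exp 1))^(x/2))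
        * (Real.Gamma ((x+2)/2) * ((x+1)/2 * Real.Gamma ((x+1)/2))) := by ring




lemma Gamma_nat_add_half (k : ℕ) :
    Real.Gamma ((k:ℝ) + 1/2) = Real.sqrt Real.pi * ((2*k).factorial) / (4^k * (k.factorial)) := by
  induction k with
  | zero =>
    rw [show ((0:ℕ):ℝ)+1/2 = 1/2 by norm_num, Real.Gamma_one_half_eq]
    simp
  | succ n ih =>
    have h : ((n+1:ℕ):ℝ) + 1/2 = ((n:ℝ)+1/2) + 1 := by push_cast; ring
    rw [h, Real.Gamma_add_one (by positivity), ih]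
    have f1 : (2*(n+1)) = (2*n+1) + 1 := by omega
    rw [f1, Nat.factorial_succ, show (2*n+1) = (2*n)+1 by omega, Nat.factorial_succ, Nat.factorial_succ]
    have h4 : (0:ℝ) < 4^n := by positivity
    have hfn : (0:ℝ) < (n.factorial : ℕ) := by exact_mod_cast Nat.factorial_pos n
    have hf2n : (0:ℝ) < ((2*n).factorial : ℕ) := by exact_mod_cast Nat.factorial_pos (2*n)
    push_cast
    rw [pow_succ]
    field_simp
    ring

lemma even_formula (k : ℕ) (hk : 1 ≤ k) :
    sphereEntropy (2*k) = Real.sqrt 2 * Stirling.stirlingSeq k / Stirling.stirlingSeq (2*k) := by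
  have hk0 : (0:ℝ) < (k:ℝ) := by exact_mod_cast hk
  have he : (0:ℝ) < exp 1 := exp_pos 1
  unfold sphereEntropy Stirling.stirlingSeq
  have h1 : ((2*k:ℕ):ℝ) = 2*(k:ℝ) := by push_cast; ring
  rw [h1]
  rw [show (2*(k:ℝ))/2 = ((k:ℕ):ℝ) by ring, Real.rpow_natCast,
      show (2*(k:ℝ)+1)/2 = (k:ℝ)+1/2 by ring, _root_.Gamma_nat_add_half]
  have h4 : 2*(k:ℝ)/(2*exp 1) = (k:ℝ)/exp 1 := by
    rw [mul_div_mul_left _ _ two_ne_zero]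
  rw [h4]
  have hsq1 : Real.sqrt (2*(2*(k:ℝ))) = 2 * Real.sqrt (k:ℝ) := by
    rw [show (2:ℝ)*(2*(k:ℝ)) = 4*(k:ℝ) by ring,
        show (4:ℝ)*(k:ℝ) = 2^2*(k:ℝ) by norm_num, Real.sqrt_mul (by positivity),
        Real.sqrt_sq (by norm_num : (0:ℝ) ≤ 2)]
  have hsq2 : Real.sqrt (2*(k:ℝ)) = Real.sqrt 2 * Real.sqrt (k:ℝ) := by
    rw [Real.sqrt_mul (by norm_num)]
  rw [hsq1, hsq2]
  have hpow : (2*(k:ℝ)/exp 1)^(2*k) = 4^k * ((k:ℝ)/exp 1)^k * ((k:ℝ)/exp 1)^k := by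
    rw [show 2*(k:ℝ)/exp 1 = 2*((k:ℝ)/exp 1) by ring, mul_pow,
        show (2:ℝ)^(2*k) = 4^k by rw [pow_mul]; norm_num,
        two_mul k, pow_add]
    ring
  rw [hpow]
  have hfn : ((k.factorial : ℕ) : ℝ) ≠ 0 := by exact_mod_cast (Nat.factorial_pos k).ne'
  have hf2n : (((2*k).factorial : ℕ) : ℝ) ≠ 0 := by exact_mod_cast (Nat.factorial_pos (2*k)).ne'
  have hppos : (0:ℝ) < ((k:ℝ)/exp 1)^k := by positivity
  have hsp : Real.sqrt Real.pi ≠ 0 := by positivity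
  have hs2 : Real.sqrt 2 ≠ 0 := by positivity
  have hsk : Real.sqrt (k:ℝ) ≠ 0 := by positivity
  have h4k : (4:ℝ)^k ≠ 0 := by positivity
  field_simp

lemma tendsto_double : Tendsto (fun k : ℕ => 2*k) atTop atTop :=
  tendsto_atTop_mono (fun n => by simp only [id_eq]; omega) tendsto_id

lemma sqrt_pi_ne : Real.sqrt Real.pi ≠ 0 := by positivity

lemma tendsto_even : Tendsto (fun k => sphereEntropy (2*k)) atTop (𝓝 (Real.sqrt 2)) := by
  have h2 : Tendsto (fun k => Stirling.stirlingSeq (2*k)) atTop (𝓝 (Real.sqrt Real.pi)) :=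
    Stirling.tendsto_stirlingSeq_sqrt_pi.comp tendsto_double
  have h1 : Tendsto (fun k => Real.sqrt 2 * Stirling.stirlingSeq k / Stirling.stirlingSeq (2*k))
      atTop (𝓝 (Real.sqrt 2 * Real.sqrt Real.pi / Real.sqrt Real.pi)) :=
    (Stirling.tendsto_stirlingSeq_sqrt_pi.const_mul _).div h2 sqrt_pi_ne
  rw [mul_div_assoc, div_self sqrt_pi_ne, mul_one] at h1
  apply h1.congr'
  filter_upwards [eventually_ge_atTop 1] with k hk
  exact (even_formula k hk).symm

lemma odd_formula (k : ℕ) (hk : 1 ≤ k) :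
    sphereEntropy (2*k+1) = (1+(1/2:ℝ)/(k:ℝ))^k *
      (2 * Real.sqrt Real.pi * Real.sqrt ((2*(k:ℝ)+1)/(4*(k:ℝ)*exp 1)) / Stirling.stirlingSeq k) := by
  have hk0 : (0:ℝ) < (k:ℝ) := by exact_mod_cast hk
  have he : (0:ℝ) < exp 1 := exp_pos 1
  unfold sphereEntropy Stirling.stirlingSeq
  have h1 : ((2*k+1:ℕ):ℝ) = 2*(k:ℝ)+1 := by push_cast; ring
  rw [h1, show (2*(k:ℝ)+1+1)/2 = (k:ℝ)+1 by ring, Real.Gamma_nat_eq_factorial]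
  have hb : (0:ℝ) < (2*(k:ℝ)+1)/(2*exp 1) := by positivity
  have hexp : ((2*(k:ℝ)+1)/(2*exp 1))^((2*(k:ℝ)+1)/2)
      = ((2*(k:ℝ)+1)/(2*exp 1))^(k:ℕ) * Real.sqrt ((2*(k:ℝ)+1)/(2*exp 1)) := by
    rw [show (2*(k:ℝ)+1)/2 = (k:ℝ)+1/2 by ring, Real.rpow_add hb, Real.rpow_natCast,
        Real.sqrt_eq_rpow]
  rw [hexp]
  have hsplit : ((2*(k:ℝ)+1)/(2*exp 1))^(k:ℕ) = (1+(1/2:ℝ)/(k:ℝ))^k * ((k:ℝ)/exp 1)^k := by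
    rw [← mul_pow]
    congr 1
    field_simp
  rw [hsplit]
  have hsq : Real.sqrt ((2*(k:ℝ)+1)/(2*exp 1)) / Real.sqrt (2*(k:ℝ))
      = Real.sqrt ((2*(k:ℝ)+1)/(4*(k:ℝ)*exp 1)) := by
    rw [← Real.sqrt_div (by positivity), div_div]
    congr 2
    ring
  have hfn : ((k.factorial : ℕ) : ℝ) ≠ 0 := by exact_mod_cast (Nat.factorial_pos k).ne'
  have hppos : (0:ℝ) < ((k:ℝ)/exp 1)^k := by positivity
  have hsk : Real.sqrt (2*(k:ℝ)) ≠ 0 := by positivity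
  rw [← hsq]
  field_simp

lemma tendsto_odd : Tendsto (fun k => sphereEntropy (2*k+1)) atTop (𝓝 (Real.sqrt 2)) := by
  have hsp : (0:ℝ) < Real.sqrt Real.pi := Real.sqrt_pos.mpr Real.pi_pos
  have hpow : Tendsto (fun k : ℕ => (1+(1/2:ℝ)/(k:ℝ))^k) atTop (𝓝 (exp (1/2))) :=
    Real.tendsto_one_add_div_pow_exp (1/2)
  have hfrac : Tendsto (fun k : ℕ => (2*(k:ℝ)+1)/(4*(k:ℝ)*exp 1)) atTop (𝓝 (1/(2*exp 1))) := by
    have h1 : Tendsto (fun k : ℕ => (2+1/(k:ℝ))/(4*exp 1)) atTop (𝓝 ((2+0)/(4*exp 1))) := by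
      exact (tendsto_const_nhds.add tendsto_one_div_atTop_nhds_zero_nat).div_const _
    have h2 : ((2:ℝ)+0)/(4*exp 1) = 1/(2*exp 1) := by
      field_simp
      ring
    rw [h2] at h1
    apply h1.congr'
    filter_upwards [eventually_ge_atTop 1] with k hk
    have hk0 : (0:ℝ) < (k:ℝ) := by exact_mod_cast hk
    rw [div_eq_div_iff (by positivity) (by positivity)]
    field_simp
  have hlim : Tendsto (fun k : ℕ => (1+(1/2:ℝ)/(k:ℝ))^k *
      (2 * Real.sqrt Real.pi * Real.sqrt ((2*(k:ℝ)+1)/(4*(k:ℝ)*exp 1)) / Stirling.stirlingSeq k))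
      atTop (𝓝 (exp (1/2) * (2 * Real.sqrt Real.pi * Real.sqrt (1/(2*exp 1)) / Real.sqrt Real.pi))) := by
    exact hpow.mul ((((hfrac.sqrt).const_mul _).div Stirling.tendsto_stirlingSeq_sqrt_pi sqrt_pi_ne))
  have hval : exp (1/2) * (2 * Real.sqrt Real.pi * Real.sqrt (1/(2*exp 1)) / Real.sqrt Real.pi)
      = Real.sqrt 2 := by
    have h2 : Real.sqrt 2 * Real.sqrt 2 = 2 := Real.mul_self_sqrt (by norm_num)
    have he2 : Real.sqrt (exp 1) ≠ 0 := by positivity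
    have hs2 : Real.sqrt 2 ≠ 0 := by positivity
    rw [show (1:ℝ)/(2*exp 1) = (2*exp 1)⁻¹ by rw [one_div],
        Real.sqrt_inv, Real.sqrt_mul (by norm_num),
        show Real.exp (1/2) = Real.exp (1/2) from rfl]
    have hexp : Real.exp (1/2) = Real.sqrt (exp 1) := Real.exp_half 1
    rw [hexp]
    field_simp
    have h2' : Real.sqrt 2 ^ 2 = 2 := Real.sq_sqrt (by norm_num)
    linear_combination (-1:ℝ) * h2'
  rw [hval] at hlim
  apply hlim.congr'
  filter_upwards [eventually_ge_atTop 1] with k hk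
  exact (odd_formula k hk).symm




lemma sqrt2_ne : Real.sqrt 2 ≠ 0 := by positivity

lemma tendsto_ratio (n : ℕ) :
    Tendsto (fun m => sphereEntropy (n+2*m+1) / sphereEntropy (n+2*m)) atTop (𝓝 1) := by
  rcases Nat.even_or_odd n with ⟨a, ha⟩ | ⟨a, ha⟩
  · have h1 : Tendsto (fun m : ℕ => a+m) atTop atTop :=
      tendsto_atTop_mono (fun m => Nat.le_add_left m a) tendsto_id
    have hnum : Tendsto (fun m => sphereEntropy (2*(a+m)+1)) atTop (𝓝 (Real.sqrt 2)) :=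
      tendsto_odd.comp h1
    have hden : Tendsto (fun m => sphereEntropy (2*(a+m))) atTop (𝓝 (Real.sqrt 2)) :=
      tendsto_even.comp h1
    have := hnum.div hden sqrt2_ne
    rw [div_self sqrt2_ne] at this
    apply this.congr
    intro m
    simp only [Pi.div_apply]
    rw [show 2*(a+m)+1 = n+2*m+1 by omega, show 2*(a+m) = n+2*m by omega]
  · have h1 : Tendsto (fun m : ℕ => a+m+1) atTop atTop :=
      tendsto_atTop_mono (fun m => by simp only [id_eq]; omega) tendsto_id
    have h2 : Tendsto (fun m : ℕ => a+m) atTop atTop :=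
      tendsto_atTop_mono (fun m => Nat.le_add_left m a) tendsto_id
    have hnum : Tendsto (fun m => sphereEntropy (2*(a+m+1))) atTop (𝓝 (Real.sqrt 2)) :=
      tendsto_even.comp h1
    have hden : Tendsto (fun m => sphereEntropy (2*(a+m)+1)) atTop (𝓝 (Real.sqrt 2)) :=
      tendsto_odd.comp h2
    have := hnum.div hden sqrt2_ne
    rw [div_self sqrt2_ne] at this
    apply this.congr
    intro m
    simp only [Pi.div_apply]
    rw [show 2*(a+m+1) = n+2*m+1 by omega, show 2*(a+m)+1 = n+2*m by omega]

lemma base : sphereEntropy 1 < sphereEntropy 0 := by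
  have hsp : Real.sqrt Real.pi ≠ 0 := by positivity
  have h0 : sphereEntropy 0 = 2 := by
    unfold sphereEntropy
    rw [Nat.cast_zero, show ((0:ℝ)+1)/2 = 1/2 by norm_num, Real.Gamma_one_half_eq,
        zero_div, show (0:ℝ)/2 = 0 by norm_num, Real.rpow_zero, mul_one,
        mul_div_assoc, div_self hsp, mul_one]
  have h1 : sphereEntropy 1 = 2 * Real.sqrt Real.pi * Real.sqrt (1/(2*exp 1)) := by
    unfold sphereEntropy
    rw [Nat.cast_one, show ((1:ℝ)+1)/2 = 1 by norm_num, Real.Gamma_one, div_one,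
        ← Real.sqrt_eq_rpow]
  rw [h0, h1]
  have hpi : Real.pi < 3.15 := Real.pi_lt_d2
  have hexp : (2.7182818283:ℝ) < exp 1 := Real.exp_one_gt_d9
  have key : Real.sqrt Real.pi * Real.sqrt (1/(2*exp 1)) < 1 := by
    rw [← Real.sqrt_mul Real.pi_pos.le]
    have : Real.pi * (1/(2*exp 1)) < 1 := by
      rw [mul_one_div, div_lt_one (by positivity)]
      nlinarith
    calc Real.sqrt (Real.pi * (1/(2*exp 1))) < Real.sqrt 1 := by
          apply Real.sqrt_lt_sqrt (by positivity) this
      _ = 1 := Real.sqrt_one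
  nlinarith
theorem sphereEntropy_strictAnti : ∀ n : ℕ, sphereEntropy (n + 1) < sphereEntropy n := by
  intro n
  rcases Nat.eq_zero_or_pos n with rfl | hn
  · exact base
  · have hv : ∀ m : ℕ, sphereEntropy (n+2*m+1) / sphereEntropy (n+2*m)
        ≤ sphereEntropy (n+2*(m+1)+1) / sphereEntropy (n+2*(m+1)) := by
      intro m
      have := step (n+2*m) (by omega)
      refine le_of_lt ?_
      calc sphereEntropy (n+2*m+1) / sphereEntropy (n+2*m)
          < sphereEntropy ((n+2*m)+3) / sphereEntropy ((n+2*m)+2) := this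
        _ = sphereEntropy (n+2*(m+1)+1) / sphereEntropy (n+2*(m+1)) := by
            rw [show (n+2*m)+3 = n+2*(m+1)+1 by omega, show (n+2*m)+2 = n+2*(m+1) by omega]
    have hmono : Monotone (fun m => sphereEntropy (n+2*m+1) / sphereEntropy (n+2*m)) :=
      monotone_nat_of_le_succ hv
    have hle : sphereEntropy (n+2*1+1) / sphereEntropy (n+2*1) ≤ 1 :=
      hmono.ge_of_tendsto (tendsto_ratio n) 1
    have hlt : sphereEntropy (n+2*0+1) / sphereEntropy (n+2*0)
        < sphereEntropy (n+2*1+1) / sphereEntropy (n+2*1) := by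
      have := step n (by omega)
      simpa [show n+3 = n+2*1+1 by omega, show n+2 = n+2*1 by omega,
             show n+1 = n+2*0+1 by omega] using this
    have : sphereEntropy (n+1) / sphereEntropy n < 1 := by
      have h0 : n+2*0+1 = n+1 := by omega
      have h0' : n+2*0 = n := by omega
      rw [h0, h0'] at hlt
      linarith
    rwa [div_lt_one (sphereEntropy_pos n)] at this
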